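/- Let n₁ be an even positive integer, n₂ a positive integer, m = (n₁+2)/2, N = m + n₂, Υ₁ = n₁ + 2n₂, and 2⋆ = 2(N−1)/(N−2) (so that (Υ₁+2)/(Υ₁−2) = 2⋆−1). Let 𝒱, 𝒬 : [0,∞) × ℝ^{n₂} → ℝ, and suppose φ : [0,∞) × ℝ^{n₂} → (0,∞) is twice continuously differentiable and u(y,z) := φ(|y|,z) solves (−Δ_y − 4|y|²Δ_z)u + 4|y|²𝒱(|y|,z)u = 4𝒬(|y|,z)u^{(Υ₁+2)/(Υ₁−2)} on ℝ^{n₁} × ℝ^{n₂}. Then the function w : ℝ^m × ℝ^{n₂} → (0,∞) defined by w(y,z) := φ(√|y|, z) solves −Δw + 𝒱(√|y|,z)w = 𝒬(√|y|,z)·w^{2⋆−1}/|y| on ℝ^m × ℝ^{n₂}. -/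

import Mathlib

noncomputable section

open MeasureTheory Real Filter Asymptotics Metric

/-- Euclidean space `ℝ^n`. -/
abbrev Euc (n : ℕ) : Type := EuclideanSpace ℝ (Fin n)

/-- Combine a vector in `ℝ^m` with a vector in `ℝ^p` into a vector in `ℝ^{m+p}`. -/
def epair {m p : ℕ} (y : Euc m) (z : Euc p) : Euc (m + p) :=
  (EuclideanSpace.equiv (Fin (m + p)) ℝ).symm
    (Fin.addCases (motive := fun _ => ℝ) (fun i => y i) (fun j => z j))

/-- First block of coordinates. -/
def yPart {m p : ℕ} (x : Euc (m + p)) : Euc m :=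
  (EuclideanSpace.equiv (Fin m) ℝ).symm (fun i => x (Fin.castAdd p i))

/-- Second block of coordinates. -/
def zPart {m p : ℕ} (x : Euc (m + p)) : Euc p :=
  (EuclideanSpace.equiv (Fin p) ℝ).symm (fun j => x (Fin.natAdd m j))

/-- Update one coordinate of a Euclidean vector. -/
def updE {n : ℕ} (x : Euc n) (i : Fin n) (t : ℝ) : Euc n :=
  (EuclideanSpace.equiv (Fin n) ℝ).symm (Function.update (fun j => x j) i t)

/-- The Laplacian, as the sum of the pure second partial derivatives. -/
def lap {n : ℕ} (f : Euc n → ℝ) (x : Euc n) : ℝ :=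
  ∑ i : Fin n, iteratedDeriv 2 (fun t => f (updE x i t)) (x i)

/-- The Laplacian in the first block of variables. -/
def lapY {a b : ℕ} (f : Euc (a + b) → ℝ) (x : Euc (a + b)) : ℝ :=
  ∑ i : Fin a, iteratedDeriv 2 (fun t => f (epair (updE (yPart x) i t) (zPart x))) (yPart x i)

/-- The Laplacian in the second block of variables. -/
def lapZ {a b : ℕ} (f : Euc (a + b) → ℝ) (x : Euc (a + b)) : ℝ :=
  ∑ i : Fin b, iteratedDeriv 2 (fun t => f (epair (yPart x) (updE (zPart x) i t))) (zPart x i)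

/-- The critical exponent `2⋆ = 2(N-1)/(N-2)`. -/
def twoStar (N : ℕ) : ℝ := 2 * ((N : ℝ) - 1) / ((N : ℝ) - 2)

/-- The standard bubble `U_{ξ,λ}`. -/
def Ubub (m p : ℕ) (ξ : Euc p) (lam : ℝ) (x : Euc (m + p)) : ℝ :=
  (((m + p : ℕ) : ℝ) - 2) ^ (((((m + p : ℕ) : ℝ)) - 2) / 2) * ((m : ℝ) - 1) ^ ((((m + p : ℕ) : ℝ) - 2) / 2) *
    (lam / ((1 + lam * ‖yPart x‖) ^ 2 + lam ^ 2 * ‖zPart x - ξ‖ ^ 2)) ^ ((((m + p : ℕ) : ℝ) - 2) / 2)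

/-- A vector in `ℝ³`. -/
def mk3 (a b c : ℝ) : Euc 3 :=
  (EuclideanSpace.equiv (Fin 3) ℝ).symm ![a, b, c]

/-- `z'`, the first three coordinates of `z ∈ ℝ^{3+q}`. -/
def zPrime {q : ℕ} (z : Euc (3 + q)) : Euc 3 := yPart z

/-- `z''`, the remaining coordinates of `z ∈ ℝ^{3+q}`. -/
def zSecond {q : ℕ} (z : Euc (3 + q)) : Euc q := zPart z

/-- The concentration points `ξ_j^±` (the sign is `sgn`). -/
def xiPt (q k : ℕ) (r h sgn : ℝ) (w : Euc q) (j : ℕ) : Euc (3 + q) :=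
  epair (mk3 (r * Real.sqrt (1 - h ^ 2) * Real.cos (2 * ((j : ℝ) - 1) * π / k))
             (r * Real.sqrt (1 - h ^ 2) * Real.sin (2 * ((j : ℝ) - 1) * π / k))
             (sgn * (r * h))) w

/-- `|(|y|, |z'|, z'') - (0, r₀, z₀'')|`. -/
def profDist (m q : ℕ) (r0 : ℝ) (z0 : Euc q) (x : Euc (m + (3 + q))) : ℝ :=
  Real.sqrt (‖yPart x‖ ^ 2 + (‖zPrime (zPart x)‖ - r0) ^ 2 + ‖zSecond (zPart x) - z0‖ ^ 2)

/-- Distance between `(r, z'')` and `(r₀, z₀'')`. -/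
def distRZ (q : ℕ) (r : ℝ) (w : Euc q) (r0 : ℝ) (w0 : Euc q) : ℝ :=
  Real.sqrt ((r - r0) ^ 2 + ‖w - w0‖ ^ 2)

/-- The potential on `ℝ^N` induced by a function of `(r, z'')`. -/
def potX (m q : ℕ) (Vb : ℝ × Euc q → ℝ) (x : Euc (m + (3 + q))) : ℝ :=
  Vb (‖zPrime (zPart x)‖, zSecond (zPart x))

/-- The cut-off function `η`. -/
structure IsCutoff (m q : ℕ) (r0 : ℝ) (z0 : Euc q) (δ : ℝ) (η : Euc (m + (3 + q)) → ℝ) : Prop where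
  smooth : ContDiff ℝ (⊤ : ℕ∞) η
  nonneg : ∀ x, 0 ≤ η x
  le_one : ∀ x, η x ≤ 1
  eq_one : ∀ x, profDist m q r0 z0 x ≤ δ → η x = 1
  eq_zero : ∀ x, 2 * δ ≤ profDist m q r0 z0 x → η x = 0
  symm : ∀ x x', ‖yPart x‖ = ‖yPart x'‖ → ‖zPrime (zPart x)‖ = ‖zPrime (zPart x')‖ →
    zSecond (zPart x) = zSecond (zPart x') → η x = η x'

/-- `Z_{ξ_j^±,λ} = η U_{ξ_j^±,λ}`. -/
def Zxi (m q k : ℕ) (η : Euc (m + (3 + q)) → ℝ) (r h sgn : ℝ) (w : Euc q) (j : ℕ)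
    (lam : ℝ) (x : Euc (m + (3 + q))) : ℝ :=
  η x * Ubub m (3 + q) (xiPt q k r h sgn w j) lam x

/-- The approximate solution `Z_{r̄,h̄,z̄'',λ}`. -/
def Zfun (m q k : ℕ) (η : Euc (m + (3 + q)) → ℝ) (r h : ℝ) (w : Euc q) (lam : ℝ)
    (x : Euc (m + (3 + q))) : ℝ :=
  ∑ j ∈ Finset.Icc 1 k, (Zxi m q k η r h 1 w j lam x + Zxi m q k η r h (-1) w j lam x)

/-- `Z^*_{r̄,h̄,z̄'',λ}` (without the cut-off). -/
def Zstar (m q k : ℕ) (r h : ℝ) (w : Euc q) (lam : ℝ) (x : Euc (m + (3 + q))) : ℝ :=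
  ∑ j ∈ Finset.Icc 1 k,
    (Ubub m (3 + q) (xiPt q k r h 1 w j) lam x + Ubub m (3 + q) (xiPt q k r h (-1) w j) lam x)

/-- The derivatives `Z_{j,l}^±` of `Z_{ξ_j^±,λ}` with respect to `λ` (`l = 2`), `r̄` (`l = 3`)
and `z̄''_l` (`l = 4, …, N-m`). -/
def Zder (m q k : ℕ) (η : Euc (m + (3 + q)) → ℝ) (r h sgn : ℝ) (w : Euc q) (j : ℕ)
    (lam : ℝ) (l : ℕ) (x : Euc (m + (3 + q))) : ℝ :=
  if l = 2 then deriv (fun t => Zxi m q k η r h sgn w j t x) lam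
  else if l = 3 then deriv (fun t => Zxi m q k η t h sgn w j lam x) r
  else if hl : l - 4 < q then
    deriv (fun t => Zxi m q k η r h sgn (updE w ⟨l - 4, hl⟩ t) j lam x) (w ⟨l - 4, hl⟩)
  else 0

/-- The weight appearing in the `‖·‖_*` norm. -/
def wgt1 (m q k : ℕ) (r h : ℝ) (w : Euc q) (lam e : ℝ) (x : Euc (m + (3 + q))) : ℝ :=
  ∑ j ∈ Finset.Icc 1 k,
    ((1 + lam * ‖yPart x‖ + lam * ‖zPart x - xiPt q k r h 1 w j‖) ^ (-e) +
     (1 + lam * ‖yPart x‖ + lam * ‖zPart x - xiPt q k r h (-1) w j‖) ^ (-e))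

/-- The weight appearing in the `‖·‖_{**}` norm. -/
def wgt2 (m q k : ℕ) (r h : ℝ) (w : Euc q) (lam e : ℝ) (x : Euc (m + (3 + q))) : ℝ :=
  ∑ j ∈ Finset.Icc 1 k,
    (1 / (lam * ‖yPart x‖) * (1 + lam * ‖yPart x‖ + lam * ‖zPart x - xiPt q k r h 1 w j‖) ^ (-e) +
     1 / (lam * ‖yPart x‖) * (1 + lam * ‖yPart x‖ + lam * ‖zPart x - xiPt q k r h (-1) w j‖) ^ (-e))

/-- The `‖·‖_*` norm. -/
def starNorm (m q k : ℕ) (r h : ℝ) (w : Euc q) (lam τ : ℝ) (u : Euc (m + (3 + q)) → ℝ) : ℝ :=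
  ⨆ x : Euc (m + (3 + q)),
    lam ^ (-((((m + (3 + q) : ℕ) : ℝ) - 2) / 2)) * |u x| /
      wgt1 m q k r h w lam (((((m + (3 + q) : ℕ) : ℝ)) - 2) / 2 + τ) x

/-- The `‖·‖_{**}` norm. -/
def dstarNorm (m q k : ℕ) (r h : ℝ) (w : Euc q) (lam τ : ℝ) (f : Euc (m + (3 + q)) → ℝ) : ℝ :=
  ⨆ x : Euc (m + (3 + q)),
    lam ^ (-((((m + (3 + q) : ℕ) : ℝ) + 2) / 2)) * |f x| /
      wgt2 m q k r h w lam ((((m + (3 + q) : ℕ) : ℝ)) / 2 + τ) x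

/-- Rotation by angle `θ` in the `(z₁,z₂)`-plane. -/
def rot2 {q : ℕ} (θ : ℝ) (z : Euc (3 + q)) : Euc (3 + q) :=
  epair (mk3 (Real.cos θ * zPrime z 0 - Real.sin θ * zPrime z 1)
             (Real.sin θ * zPrime z 0 + Real.cos θ * zPrime z 1)
             (zPrime z 2)) (zSecond z)

/-- The reflection `(z₁,z₂,z₃) ↦ (z₁,-z₂,-z₃)`. -/
def flip23 {q : ℕ} (z : Euc (3 + q)) : Euc (3 + q) :=
  epair (mk3 (zPrime z 0) (-(zPrime z 1)) (-(zPrime z 2))) (zSecond z)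

/-- Membership in the symmetric class `H_s` (inside `D^{1,2}`). -/
def memHs (m q k : ℕ) (u : Euc (m + (3 + q)) → ℝ) : Prop :=
  (Integrable fun x : Euc (m + (3 + q)) => ‖fderiv ℝ u x‖ ^ 2) ∧
  (Integrable fun x : Euc (m + (3 + q)) => |u x| ^ twoStar (m + (3 + q)) / ‖yPart x‖) ∧
  (∀ x x' : Euc (m + (3 + q)), ‖yPart x‖ = ‖yPart x'‖ → zPart x = zPart x' → u x = u x') ∧
  (∀ x : Euc (m + (3 + q)), u (epair (yPart x) (flip23 (zPart x))) = u x) ∧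
  (∀ x : Euc (m + (3 + q)), u (epair (yPart x) (rot2 (2 * π / k) (zPart x))) = u x)

/-- Membership in the constrained space `ℍ`. -/
def memH (m q k : ℕ) (η : Euc (m + (3 + q)) → ℝ) (r h : ℝ) (w : Euc q) (lam : ℝ)
    (v : Euc (m + (3 + q)) → ℝ) : Prop :=
  memHs m q k v ∧
  ∀ j ∈ Finset.Icc 1 k, ∀ l ∈ Finset.Icc 2 (3 + q), ∀ sgn ∈ ({1, -1} : Set ℝ),
    ∫ x : Euc (m + (3 + q)),
      (Zxi m q k η r h sgn w j lam x) ^ (twoStar (m + (3 + q)) - 2) / ‖yPart x‖ *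
        Zder m q k η r h sgn w j lam l x * v x = 0

/-- The right-hand side family `Σ_j (Z_{ξ_j^±,λ}^{2⋆-2}/|y|) Z_{j,l}^±`. -/
def orthFam (m q k : ℕ) (η : Euc (m + (3 + q)) → ℝ) (r h : ℝ) (w : Euc q) (lam : ℝ) (l : ℕ)
    (x : Euc (m + (3 + q))) : ℝ :=
  ∑ j ∈ Finset.Icc 1 k,
    ((Zxi m q k η r h 1 w j lam x) ^ (twoStar (m + (3 + q)) - 2) / ‖yPart x‖ *
        Zder m q k η r h 1 w j lam l x +
     (Zxi m q k η r h (-1) w j lam x) ^ (twoStar (m + (3 + q)) - 2) / ‖yPart x‖ *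
        Zder m q k η r h (-1) w j lam l x)

/-- `Σ_l c_l Σ_j (Z_{ξ_j^±,λ}^{2⋆-2}/|y|) Z_{j,l}^±`. -/
def multSum (m q k : ℕ) (η : Euc (m + (3 + q)) → ℝ) (r h : ℝ) (w : Euc q) (lam : ℝ)
    (c : ℕ → ℝ) (x : Euc (m + (3 + q))) : ℝ :=
  ∑ l ∈ Finset.Icc 2 (3 + q), c l * orthFam m q k η r h w lam l x

/-- The linearized problem (2.1). -/
def linEq (m q k : ℕ) (Vb Qb : ℝ × Euc q → ℝ) (η : Euc (m + (3 + q)) → ℝ) (r h : ℝ)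
    (w : Euc q) (lam : ℝ) (c : ℕ → ℝ) (f φ : Euc (m + (3 + q)) → ℝ) : Prop :=
  ∀ x, -lap φ x + potX m q Vb x * φ x -
      (twoStar (m + (3 + q)) - 1) * potX m q Qb x *
        ((Zfun m q k η r h w lam x) ^ (twoStar (m + (3 + q)) - 2) / ‖yPart x‖) * φ x
    = f x + multSum m q k η r h w lam c x

/-- The residual of `u = Z + φ` in the equation. -/
def resid (m q k : ℕ) (Vb Qb : ℝ × Euc q → ℝ) (η : Euc (m + (3 + q)) → ℝ) (r h : ℝ)
    (w : Euc q) (lam : ℝ) (φ : Euc (m + (3 + q)) → ℝ) (x : Euc (m + (3 + q))) : ℝ :=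
  -lap (fun x' => Zfun m q k η r h w lam x' + φ x') x
    + potX m q Vb x * (Zfun m q k η r h w lam x + φ x)
    - potX m q Qb x *
        (max (Zfun m q k η r h w lam x + φ x) 0) ^ (twoStar (m + (3 + q)) - 1) / ‖yPart x‖

/-- The perturbed problem (2.6). -/
def pertEq (m q k : ℕ) (Vb Qb : ℝ × Euc q → ℝ) (η : Euc (m + (3 + q)) → ℝ) (r h : ℝ)
    (w : Euc q) (lam : ℝ) (c : ℕ → ℝ) (φ : Euc (m + (3 + q)) → ℝ) : Prop :=
  ∀ x, resid m q k Vb Qb η r h w lam φ x = multSum m q k η r h w lam c x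

/-- Condition (C₁): boundedness and nonnegativity. -/
def CondC1 (q : ℕ) (Vb Qb : ℝ × Euc q → ℝ) : Prop :=
  (∃ C, ∀ a, |Vb a| ≤ C ∧ |Qb a| ≤ C) ∧ ∀ a, 0 ≤ Vb a ∧ 0 ≤ Qb a

/-- `a0` is a stable critical point of `Qb` (the meaning of `deg(∇Q, a0) ≠ 0`). -/
def StableCrit (q : ℕ) (Qb : ℝ × Euc q → ℝ) (a0 : ℝ × Euc q) (ρ : ℝ) : Prop :=
  fderiv ℝ Qb a0 = 0 ∧
  ∀ ρ', 0 < ρ' → ρ' ≤ ρ →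
    ∃ ε > 0, ∀ G : ℝ × Euc q → (ℝ × Euc q) →L[ℝ] ℝ,
      ContinuousOn G (closedBall a0 ρ') →
      (∀ a ∈ closedBall a0 ρ', ‖G a - fderiv ℝ Qb a‖ ≤ ε) →
      ∃ a ∈ closedBall a0 ρ', G a = 0

/-- Condition (C₂). -/
def CondC2 (q : ℕ) (Qb : ℝ × Euc q → ℝ) (r0 : ℝ) (z0 : Euc q) (ρ : ℝ) : Prop :=
  0 < r0 ∧ Qb (r0, z0) = 1 ∧ StableCrit q Qb (r0, z0) ρ

/-- The Laplacian of a function of `(r, z'')`. -/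
def lapRZ (q : ℕ) (Qb : ℝ × Euc q → ℝ) (a : ℝ × Euc q) : ℝ :=
  iteratedDeriv 2 (fun t => Qb (t, a.2)) a.1 +
    ∑ i : Fin q, iteratedDeriv 2 (fun t => Qb (a.1, updE a.2 i t)) (a.2 i)

/-- Condition (C₃); `Bt` is the constant `B̃₁`. -/
def CondC3 (m q : ℕ) (Vb Qb : ℝ × Euc q → ℝ) (r0 : ℝ) (z0 : Euc q) (ρ Bt : ℝ) : Prop :=
  0 < ρ ∧ ContDiffOn ℝ 1 Vb (ball (r0, z0) ρ) ∧ ContDiffOn ℝ 3 Qb (ball (r0, z0) ρ) ∧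
  0 < Bt ∧
  (∀ (ξ : Euc (3 + q)) (lam : ℝ), 0 < lam →
    deriv (fun t => ∫ x : Euc (m + (3 + q)), (Ubub m (3 + q) ξ t x) ^ 2) lam
      = -(2 * Bt) / lam ^ 3) ∧
  0 < Bt * Vb (r0, z0) * (∫ x : Euc (m + (3 + q)), (Ubub m (3 + q) 0 1 x) ^ 2) -
      lapRZ q Qb (r0, z0) / (twoStar (m + (3 + q)) * ((3 : ℝ) + q)) *
        ∫ x : Euc (m + (3 + q)),
          ‖zPart x‖ ^ 2 / ‖yPart x‖ * (Ubub m (3 + q) 0 1 x) ^ twoStar (m + (3 + q))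

/-- The constant `B₁` of the energy expansion. -/
def B1const (m q : ℕ) (Vb Qb : ℝ × Euc q → ℝ) (r0 : ℝ) (z0 : Euc q) (Bt : ℝ) : ℝ :=
  Bt * Vb (r0, z0) * (∫ x : Euc (m + (3 + q)), (Ubub m (3 + q) 0 1 x) ^ 2) -
    lapRZ q Qb (r0, z0) / (twoStar (m + (3 + q)) * ((3 : ℝ) + q)) *
      ∫ x : Euc (m + (3 + q)),
        ‖zPart x‖ ^ 2 / ‖yPart x‖ * (Ubub m (3 + q) 0 1 x) ^ twoStar (m + (3 + q))

/-- The energy functional `I`. -/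
def Ifun (m q : ℕ) (Vb Qb : ℝ × Euc q → ℝ) (u : Euc (m + (3 + q)) → ℝ) : ℝ :=
  (1 / 2) * (∫ x : Euc (m + (3 + q)), (‖fderiv ℝ u x‖ ^ 2 + potX m q Vb x * u x ^ 2)) -
  (1 / twoStar (m + (3 + q))) *
    ∫ x : Euc (m + (3 + q)),
      potX m q Qb x * (max (u x) 0) ^ twoStar (m + (3 + q)) / ‖yPart x‖

/-- `β₁ = α/(N-2)` where `α = N - 4 - ι`. -/
def beta1 (m q : ℕ) (ι : ℝ) : ℝ :=
  (((m + (3 + q) : ℕ) : ℝ) - 4 - ι) / (((m + (3 + q) : ℕ) : ℝ) - 2)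

/-- `τ = (N-4-α)/(N-2-α) = ι/(2+ι)` in the Case 1 regime. -/
def tau1 (ι : ℝ) : ℝ := ι / (2 + ι)

/-- The Case-1 parameter regime for a single `k` (with slack `θ` in the `o(·)` condition). -/
def regime1 (m q : ℕ) (r0 : ℝ) (z0 : Euc q) (ι L0 L1 M1 ϑ θ : ℝ) (k : ℕ)
    (lam r h : ℝ) (w : Euc q) : Prop :=
  (L0 * (k : ℝ) ^ (((((m + (3 + q) : ℕ) : ℝ)) - 2) / ι) ≤ lam ∧
     lam ≤ L1 * (k : ℝ) ^ (((((m + (3 + q) : ℕ) : ℝ)) - 2) / ι)) ∧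
  0 < r ∧ 0 < h ∧ h < 1 ∧
  distRZ q r w r0 z0 ≤ lam ^ (-(1 - ϑ)) ∧
  |Real.sqrt (1 - h ^ 2) - M1 * lam ^ (-(beta1 m q ι))| ≤ θ * lam ^ (-(beta1 m q ι))

/-- `∂Z_{r̄,h̄,z̄'',λ}/∂λ`. -/
def dZlam (m q k : ℕ) (η : Euc (m + (3 + q)) → ℝ) (r h : ℝ) (w : Euc q) (lam : ℝ)
    (x : Euc (m + (3 + q))) : ℝ :=
  deriv (fun t => Zfun m q k η r h w t x) lam

/-- The coordinate direction of `z''_i` inside `ℝ^N`. -/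
def dirZ'' (m q : ℕ) (i : Fin q) : Euc (m + (3 + q)) :=
  epair (0 : Euc m) (epair (0 : Euc 3) (EuclideanSpace.single i (1 : ℝ)))

/-- `N` as a real number. -/
def Nreal (m q : ℕ) : ℝ := ((m + (3 + q) : ℕ) : ℝ)

open Topology

lemma cd2_deriv1 {ψ : ℝ → ℝ} {x : ℝ} (h : ContDiffAt ℝ 2 ψ x) : ContDiffAt ℝ 1 (deriv ψ) x := by
  obtain ⟨u, hu, hcd⟩ := h.contDiffOn (le_refl 2) (by norm_num)
  obtain ⟨v, hvu, hv, hxv⟩ := _root_.mem_nhds_iff.1 hu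
  have : ContDiffOn ℝ 1 (deriv ψ) v := (hcd.mono hvu).deriv_of_isOpen hv (by norm_num)
  exact (this.contDiffAt (hv.mem_nhds hxv))

lemma deriv_comp_pt {ψ ρ : ℝ → ℝ} {t₀ : ℝ}
    (hψ : ContDiffAt ℝ 2 ψ (ρ t₀)) (hρ : ContDiffAt ℝ 2 ρ t₀) :
    deriv (fun t => ψ (ρ t)) t₀ = deriv ψ (ρ t₀) * deriv ρ t₀ :=
  deriv_comp t₀ (hψ.differentiableAt (by norm_num)) (hρ.differentiableAt (by norm_num))

lemma deriv2_comp_pt {ψ ρ : ℝ → ℝ} {t₀ : ℝ}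
    (hψ : ContDiffAt ℝ 2 ψ (ρ t₀)) (hρ : ContDiffAt ℝ 2 ρ t₀) :
    deriv (deriv (fun t => ψ (ρ t))) t₀ =
      deriv (deriv ψ) (ρ t₀) * (deriv ρ t₀)^2 + deriv ψ (ρ t₀) * deriv (deriv ρ) t₀ := by
  have hρev : ∀ᶠ t in 𝓝 t₀, ContDiffAt ℝ 2 ρ t := hρ.eventually (by norm_num)
  have hψev : ∀ᶠ t in 𝓝 t₀, ContDiffAt ℝ 2 ψ (ρ t) :=
    (hρ.continuousAt.tendsto).eventually (hψ.eventually (by norm_num))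
  have hev : (fun t => deriv (fun s => ψ (ρ s)) t) =ᶠ[𝓝 t₀] fun t => deriv ψ (ρ t) * deriv ρ t := by
    filter_upwards [hρev, hψev] with t h1 h2
    exact deriv_comp_pt h2 h1
  rw [hev.deriv_eq]
  have H1 : HasDerivAt (fun t => deriv ψ (ρ t)) (deriv (deriv ψ) (ρ t₀) * deriv ρ t₀) t₀ := by
    have hd := ((cd2_deriv1 hψ).differentiableAt one_ne_zero).hasDerivAt
    exact (hd.comp t₀ (hρ.differentiableAt (by norm_num)).hasDerivAt)
  have H2 : HasDerivAt (deriv ρ) (deriv (deriv ρ) t₀) t₀ :=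
    ((cd2_deriv1 hρ).differentiableAt one_ne_zero).hasDerivAt
  rw [show (fun t => deriv ψ (ρ t) * deriv ρ t) = (fun t => deriv ψ (ρ t)) * deriv ρ from rfl,
    (H1.mul H2).deriv]
  ring
lemma deriv_sqrt1 {a : ℝ} (ha : 0 < a) : deriv Real.sqrt a = 1/(2*Real.sqrt a) :=
  (Real.hasDerivAt_sqrt ha.ne').deriv

lemma deriv_sqrt2 {a : ℝ} (ha : 0 < a) :
    deriv (deriv Real.sqrt) a = -1/(4*a*Real.sqrt a) := by
  have hev : deriv Real.sqrt =ᶠ[𝓝 a] fun x => 1/(2*Real.sqrt x) := by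
    filter_upwards [Ioi_mem_nhds ha] with x hx
    exact deriv_sqrt1 hx
  rw [hev.deriv_eq]
  have h1 : HasDerivAt (fun x : ℝ => 2*Real.sqrt x) (2*(1/(2*Real.sqrt a))) a :=
    (Real.hasDerivAt_sqrt ha.ne').const_mul 2
  have h2 : HasDerivAt (fun x : ℝ => 1/(2*Real.sqrt x))
      (-(2*(1/(2*Real.sqrt a))) / (2*Real.sqrt a)^2) a := by
    simpa [one_div, Pi.inv_def] using h1.inv (by positivity)
  rw [h2.deriv]
  have hsa : Real.sqrt a > 0 := Real.sqrt_pos.2 ha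
  have h3 : Real.sqrt a * Real.sqrt a = a := Real.mul_self_sqrt ha.le
  field_simp
  ring_nf
  nlinarith [h3, hsa]

lemma cd2_comp {ψ ρ : ℝ → ℝ} {t₀ : ℝ}
    (hψ : ContDiffAt ℝ 2 ψ (ρ t₀)) (hρ : ContDiffAt ℝ 2 ρ t₀) :
    ContDiffAt ℝ 2 (fun t => ψ (ρ t)) t₀ := hψ.comp t₀ hρ

lemma deriv_comp_pt' {ψ ρ : ℝ → ℝ} {t₀ : ℝ}
    (hψ : ContDiffAt ℝ 2 ψ (ρ t₀)) (hρ : ContDiffAt ℝ 2 ρ t₀) :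
    deriv (fun t => ψ (ρ t)) t₀ = deriv ψ (ρ t₀) * deriv ρ t₀ :=
  deriv_comp t₀ (hψ.differentiableAt (by norm_num)) (hρ.differentiableAt (by norm_num))

lemma oneLayer {ψ : ℝ → ℝ} {S t₀ : ℝ} (hpos : 0 < S + t₀^2)
    (hψ : ContDiffAt ℝ 2 ψ (Real.sqrt (S + t₀^2))) :
    iteratedDeriv 2 (fun t => ψ (Real.sqrt (S + t^2))) t₀ =
      deriv (deriv ψ) (Real.sqrt (S+t₀^2)) * (t₀^2/(S+t₀^2)) +
      deriv ψ (Real.sqrt (S+t₀^2)) * (1/Real.sqrt (S+t₀^2) - t₀^2/((S+t₀^2)*Real.sqrt (S+t₀^2))) := by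
  set a := S + t₀^2 with ha_def
  have hsq : ContDiffAt ℝ 2 Real.sqrt a := Real.contDiffAt_sqrt hpos.ne'
  set χ : ℝ → ℝ := fun u => ψ (Real.sqrt u) with hχ_def
  have hχ : ContDiffAt ℝ 2 χ a := hψ.comp a hsq
  have hq : ContDiffAt ℝ 2 (fun t : ℝ => S + t^2) t₀ :=
    (contDiff_const.add (contDiff_id.pow 2)).contDiffAt
  have hq1 : deriv (fun t : ℝ => S + t^2) = fun t => 2*t := by
    funext t
    simpa using (((hasDerivAt_pow 2 t).const_add S)).deriv
  have hq2 : deriv (deriv (fun t : ℝ => S + t^2)) t₀ = 2 := by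
    rw [hq1]; simpa using ((hasDerivAt_id t₀).const_mul 2).deriv
  have hqa : (fun t : ℝ => S + t^2) t₀ = a := rfl
  have hχ1 : deriv χ a = deriv ψ (Real.sqrt a) * (1/(2*Real.sqrt a)) := by
    rw [hχ_def]
    rw [deriv_comp_pt' hψ hsq, deriv_sqrt1 hpos]
  have hχ2 : deriv (deriv χ) a =
      deriv (deriv ψ) (Real.sqrt a) * (1/(2*Real.sqrt a))^2 +
      deriv ψ (Real.sqrt a) * (-1/(4*a*Real.sqrt a)) := by
    rw [hχ_def, deriv2_comp_pt hψ hsq, deriv_sqrt1 hpos, deriv_sqrt2 hpos]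
  have key : iteratedDeriv 2 (fun t => ψ (Real.sqrt (S + t^2))) t₀
      = deriv (deriv (fun t => χ ((fun s : ℝ => S + s^2) t))) t₀ := by
    simp only [iteratedDeriv_succ, iteratedDeriv_zero]
    rfl
  have h22 : deriv (fun t : ℝ => 2*t) t₀ = 2 := by
    simpa using ((hasDerivAt_id t₀).const_mul 2).deriv
  rw [key, @deriv2_comp_pt χ (fun s : ℝ => S + s^2) t₀ hχ hq, hq1, h22]
  rw [← ha_def, hχ1, hχ2]
  beta_reduce
  rw [ha_def]
  have hs0 : (0:ℝ) < Real.sqrt (S + t₀^2) := Real.sqrt_pos.2 (ha_def ▸ hpos)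
  have hb2 : Real.sqrt (S + t₀^2) ^ 2 = S + t₀^2 := Real.sq_sqrt (le_of_lt (ha_def ▸ hpos))
  set b := Real.sqrt (S + t₀^2) with hbdef
  have hb0 : b ≠ 0 := hs0.ne'
  rw [show S + t₀^2 = b^2 from hb2.symm]
  clear_value b
  field_simp
  ring

lemma twoLayer {ψ : ℝ → ℝ} {S t₀ : ℝ} (hpos : 0 < S + t₀^2)
    (hψ : ContDiffAt ℝ 2 ψ (Real.sqrt (Real.sqrt (S + t₀^2)))) :
    iteratedDeriv 2 (fun t => ψ (Real.sqrt (Real.sqrt (S + t^2)))) t₀ =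
      (deriv (deriv ψ) (Real.sqrt (Real.sqrt (S + t₀^2))) * (1/(2*Real.sqrt (Real.sqrt (S + t₀^2))))^2
        + deriv ψ (Real.sqrt (Real.sqrt (S + t₀^2))) *
            (-1/(4*Real.sqrt (S + t₀^2)*Real.sqrt (Real.sqrt (S + t₀^2))))) * (t₀^2/(S+t₀^2))
      + (deriv ψ (Real.sqrt (Real.sqrt (S + t₀^2))) * (1/(2*Real.sqrt (Real.sqrt (S + t₀^2))))) *
          (1/Real.sqrt (S + t₀^2) - t₀^2/((S+t₀^2)*Real.sqrt (S + t₀^2))) := by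
  have hb1 : (0:ℝ) < Real.sqrt (S + t₀^2) := Real.sqrt_pos.2 hpos
  have hsq : ContDiffAt ℝ 2 Real.sqrt (Real.sqrt (S + t₀^2)) := Real.contDiffAt_sqrt hb1.ne'
  have hχ : ContDiffAt ℝ 2 (fun u => ψ (Real.sqrt u)) (Real.sqrt (S + t₀^2)) := hψ.comp _ hsq
  have h := oneLayer (ψ := fun u => ψ (Real.sqrt u)) hpos hχ
  beta_reduce at h
  rw [h, @deriv_comp_pt ψ Real.sqrt (Real.sqrt (S + t₀^2)) hψ hsq,
    @deriv2_comp_pt ψ Real.sqrt (Real.sqrt (S + t₀^2)) hψ hsq,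
    deriv_sqrt1 hb1, deriv_sqrt2 hb1]
lemma epair_apply {m p : ℕ} (y : Euc m) (z : Euc p) (j : Fin (m+p)) :
    epair y z j = Fin.addCases (motive := fun _ => ℝ) (fun i => y i) (fun j => z j) j := rfl
lemma yPart_apply {m p : ℕ} (x : Euc (m+p)) (i : Fin m) : yPart x i = x (Fin.castAdd p i) := rfl
lemma zPart_apply {m p : ℕ} (x : Euc (m+p)) (j : Fin p) : zPart x j = x (Fin.natAdd m j) := rfl
lemma updE_apply {n : ℕ} (x : Euc n) (i : Fin n) (t : ℝ) (j : Fin n) :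
    updE x i t j = Function.update (fun j => x j) i t j := rfl

lemma yPart_epair {m p : ℕ} (y : Euc m) (z : Euc p) : yPart (epair y z) = y := by
  ext i; rw [yPart_apply, epair_apply, Fin.addCases_left]
lemma zPart_epair {m p : ℕ} (y : Euc m) (z : Euc p) : zPart (epair y z) = z := by
  ext j; rw [zPart_apply, epair_apply, Fin.addCases_right]

lemma updE_castAdd {m p : ℕ} (x : Euc (m+p)) (i : Fin m) (t : ℝ) :
    updE x (Fin.castAdd p i) t = epair (updE (yPart x) i t) (zPart x) := by
  ext j
  refine Fin.addCases (fun j' => ?_) (fun j' => ?_) j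
  · rw [updE_apply, epair_apply, Fin.addCases_left, updE_apply, Function.update_apply,
      Function.update_apply, yPart_apply]
    by_cases h : j' = i
    · simp [h]
    · have : Fin.castAdd p j' ≠ Fin.castAdd p i := by
        simpa [Fin.ext_iff] using fun hh => h (Fin.ext hh)
      simp [h, this]
  · rw [updE_apply, epair_apply, Fin.addCases_right, zPart_apply]
    have : Fin.natAdd m j' ≠ Fin.castAdd p i := by
      simp [Fin.ext_iff]; omega
    simp [Function.update_apply, this]

lemma updE_natAdd {m p : ℕ} (x : Euc (m+p)) (j : Fin p) (t : ℝ) :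
    updE x (Fin.natAdd m j) t = epair (yPart x) (updE (zPart x) j t) := by
  ext j''
  refine Fin.addCases (fun j' => ?_) (fun j' => ?_) j''
  · rw [updE_apply, epair_apply, Fin.addCases_left, yPart_apply]
    have : Fin.castAdd p j' ≠ Fin.natAdd m j := by
      simp [Fin.ext_iff]; omega
    simp [Function.update_apply, this]
  · rw [updE_apply, epair_apply, Fin.addCases_right, updE_apply, Function.update_apply,
      Function.update_apply, zPart_apply]
    by_cases h : j' = j
    · simp [h]
    · have : Fin.natAdd m j' ≠ Fin.natAdd m j := by
        simpa [Fin.ext_iff] using fun hh => h (Fin.ext hh)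
      simp [h, this]

lemma norm_updE {n : ℕ} (y : Euc n) (i : Fin n) (t : ℝ) :
    ‖updE y i t‖ = Real.sqrt ((‖y‖^2 - (y i)^2) + t^2) := by
  have hy : ‖y‖^2 = ∑ j, (y j)^2 := by
    rw [EuclideanSpace.norm_eq, Real.sq_sqrt (by positivity)]
    simp [Real.norm_eq_abs, sq_abs]
  rw [EuclideanSpace.norm_eq]
  congr 1
  have h1 : ∀ j, ‖updE y i t j‖^2 = Function.update (fun j => (y j)^2) i (t^2) j := by
    intro j
    rw [updE_apply, Real.norm_eq_abs, sq_abs]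
    exact (Function.apply_update (fun _ v => v^2) (fun j => y j) i t j)
  calc ∑ j, ‖updE y i t j‖^2 = ∑ j, Function.update (fun j => (y j)^2) i (t^2) j :=
        Finset.sum_congr rfl (fun j _ => h1 j)
    _ = t^2 + ∑ j ∈ Finset.univ \ {i}, (y j)^2 := Finset.sum_update_of_mem (Finset.mem_univ i) _ _
    _ = (‖y‖^2 - (y i)^2) + t^2 := by
        rw [hy, Finset.sum_eq_sum_sdiff_singleton_add (Finset.mem_univ i) (fun j => (y j)^2)]
        ring

lemma coordY {n : ℕ} (ψ : ℝ → ℝ) (y : Euc n) (hy : y ≠ 0) (i : Fin n)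
    (hψ : ContDiffAt ℝ 2 ψ ‖y‖) :
    iteratedDeriv 2 (fun t => ψ ‖updE y i t‖) (y i)
      = deriv (deriv ψ) ‖y‖ * ((y i)^2/‖y‖^2)
        + deriv ψ ‖y‖ * (1/‖y‖ - (y i)^2/‖y‖^3) := by
  have hy0 : 0 < ‖y‖ := norm_pos_iff.mpr hy
  have hS : (‖y‖^2 - (y i)^2) + (y i)^2 = ‖y‖^2 := by ring
  have hpos : 0 < (‖y‖^2 - (y i)^2) + (y i)^2 := by rw [hS]; positivity
  have hsq : Real.sqrt ((‖y‖^2 - (y i)^2) + (y i)^2) = ‖y‖ := by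
    rw [hS, Real.sqrt_sq hy0.le]
  simp only [norm_updE]
  rw [oneLayer hpos (by rw [hsq]; exact hψ), hsq, hS]
  have h1 : ‖y‖^2 * ‖y‖ = ‖y‖^3 := by ring
  rw [h1]

lemma coordW {n : ℕ} (ψ : ℝ → ℝ) (y : Euc n) (hy : y ≠ 0) (i : Fin n)
    (hψ : ContDiffAt ℝ 2 ψ (Real.sqrt ‖y‖)) :
    iteratedDeriv 2 (fun t => ψ (Real.sqrt ‖updE y i t‖)) (y i)
      = (deriv (deriv ψ) (Real.sqrt ‖y‖)/(4*‖y‖)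
          - deriv ψ (Real.sqrt ‖y‖)/(4*‖y‖*Real.sqrt ‖y‖)) * ((y i)^2/‖y‖^2)
        + deriv ψ (Real.sqrt ‖y‖)/(2*Real.sqrt ‖y‖) * (1/‖y‖ - (y i)^2/‖y‖^3) := by
  have hy0 : 0 < ‖y‖ := norm_pos_iff.mpr hy
  have hS : (‖y‖^2 - (y i)^2) + (y i)^2 = ‖y‖^2 := by ring
  have hpos : 0 < (‖y‖^2 - (y i)^2) + (y i)^2 := by rw [hS]; positivity
  have hsq : Real.sqrt ((‖y‖^2 - (y i)^2) + (y i)^2) = ‖y‖ := by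
    rw [hS, Real.sqrt_sq hy0.le]
  simp only [norm_updE]
  rw [twoLayer hpos (by rw [hsq]; exact hψ), hsq]
  have hr0 : (0:ℝ) < Real.sqrt ‖y‖ := Real.sqrt_pos.2 hy0
  set b := Real.sqrt ‖y‖ with hbdef
  have hb0 : b ≠ 0 := hr0.ne'
  rw [show ‖y‖ = b^2 from (Real.sq_sqrt (norm_nonneg y)).symm]
  clear_value b
  field_simp
  ring

lemma sum_sq_eq_norm_sq {n : ℕ} (y : Euc n) : ∑ i, (y i)^2 = ‖y‖^2 := by
  rw [EuclideanSpace.norm_eq, Real.sq_sqrt (by positivity)]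
  simp [Real.norm_eq_abs, sq_abs]

lemma sumlin {n : ℕ} (g : Fin n → ℝ) (c₁ c₂ : ℝ) :
    ∑ i : Fin n, (c₁ * g i + c₂) = c₁ * (∑ i, g i) + (n : ℝ) * c₂ := by
  rw [Finset.sum_add_distrib, ← Finset.mul_sum, Finset.sum_const, Finset.card_univ,
    Fintype.card_fin, nsmul_eq_mul]

/-- the change of variables transforming the Grushin problem into
the Hardy-type problem. -/
theorem stmt3 (n₁ n₂ : ℕ) (hn₁ : 0 < n₁) (heven : Even n₁) (hn₂ : 0 < n₂)
    (m : ℕ) (hm : 2 * m = n₁ + 2)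
    (𝒱 𝒬 : ℝ → Euc n₂ → ℝ)
    (φb : ℝ × Euc n₂ → ℝ)
    (hreg : ContDiffOn ℝ 2 φb {a : ℝ × Euc n₂ | 0 ≤ a.1})
    (hpos : ∀ a : ℝ × Euc n₂, 0 ≤ a.1 → 0 < φb a)
    (hsol : ∀ x : Euc (n₁ + n₂),
      -lapY (fun x' => φb (‖yPart x'‖, zPart x')) x
          - 4 * ‖yPart x‖ ^ 2 * lapZ (fun x' => φb (‖yPart x'‖, zPart x')) x
          + 4 * ‖yPart x‖ ^ 2 * 𝒱 ‖yPart x‖ (zPart x) * φb (‖yPart x‖, zPart x)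
        = 4 * 𝒬 ‖yPart x‖ (zPart x) *
            (φb (‖yPart x‖, zPart x)) ^
              ((((n₁ : ℝ) + 2 * n₂) + 2) / (((n₁ : ℝ) + 2 * n₂) - 2))) :
    ∀ x : Euc (m + n₂), yPart x ≠ 0 →
      -lap (fun x' => φb (Real.sqrt ‖yPart x'‖, zPart x')) x
          + 𝒱 (Real.sqrt ‖yPart x‖) (zPart x) * φb (Real.sqrt ‖yPart x‖, zPart x)
        = 𝒬 (Real.sqrt ‖yPart x‖) (zPart x) *
            (φb (Real.sqrt ‖yPart x‖, zPart x)) ^ (twoStar (m + n₂) - 1) / ‖yPart x‖ := by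

  intro x hx0
  have hs : 0 < ‖yPart x‖ := norm_pos_iff.mpr hx0
  have hr : 0 < Real.sqrt ‖yPart x‖ := Real.sqrt_pos.2 hs
  have hr2 : Real.sqrt ‖yPart x‖ ^ 2 = ‖yPart x‖ := Real.sq_sqrt (norm_nonneg _)
  set z : Euc n₂ := zPart x with hzdef
  set ψ : ℝ → ℝ := fun t => φb (t, z) with hψdef
  set r : ℝ := Real.sqrt ‖yPart x‖ with hrdef
  have hψ : ContDiffAt ℝ 2 ψ r := by
    have hmem : {a : ℝ × Euc n₂ | 0 ≤ a.1} ∈ 𝓝 ((r, z) : ℝ × Euc n₂) := by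
      have hopen : IsOpen {a : ℝ × Euc n₂ | 0 < a.1} := isOpen_lt continuous_const continuous_fst
      have h2 : {a : ℝ × Euc n₂ | 0 < a.1} ∈ 𝓝 ((r, z) : ℝ × Euc n₂) := hopen.mem_nhds hr
      exact Filter.mem_of_superset h2 (fun a ha => show (0:ℝ) ≤ a.1 from le_of_lt ha)
    exact (hreg.contDiffAt hmem).comp r ((contDiffAt_id.prodMk contDiffAt_const))
  set A := deriv ψ r with hA
  set B := deriv (deriv ψ) r with hB
  -- comparison point
  set y' : Euc n₁ := EuclideanSpace.single (⟨0, hn₁⟩ : Fin n₁) r with hy'def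
  have hny' : ‖y'‖ = r := by
    rw [hy'def, EuclideanSpace.norm_single, Real.norm_eq_abs, abs_of_pos hr]
  have hy'0 : y' ≠ 0 := fun h => by
    rw [h, norm_zero] at hny'; exact hr.ne hny'
  set Lz := lapZ (fun x' : Euc (n₁ + n₂) => φb (‖yPart x'‖, zPart x')) (epair y' z) with hLzdef
  -- Laplacian in the first block at the comparison point
  have hlapY : lapY (fun x' : Euc (n₁ + n₂) => φb (‖yPart x'‖, zPart x')) (epair y' z)
      = (B/r^2 - A/r^3) * r^2 + (n₁ : ℝ) * (A/r) := by
    unfold lapY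
    simp only [yPart_epair, zPart_epair]
    have e1 : ∀ i : Fin n₁, iteratedDeriv 2 (fun t => φb (‖updE y' i t‖, z)) (y' i)
        = (B/r^2 - A/r^3) * (y' i)^2 + A/r := by
      intro i
      rw [coordY ψ y' hy'0 i (by rw [hny']; exact hψ), hny']
      rw [hrdef] at hA hB ⊢
      rw [← hA, ← hB]
      ring
    rw [Finset.sum_congr rfl (fun i _ => e1 i), sumlin, sum_sq_eq_norm_sq, hny']
  -- Laplacian of the transformed function
  have hlapw : lap (fun x' : Euc (m + n₂) => φb (Real.sqrt ‖yPart x'‖, zPart x')) x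
      = ((B/(4*‖yPart x‖) - A/(4*‖yPart x‖*r))/‖yPart x‖^2 - (A/(2*r))/‖yPart x‖^3) * ‖yPart x‖^2
        + (m : ℝ) * ((A/(2*r))/‖yPart x‖) + Lz := by
    unfold lap
    rw [Fin.sum_univ_add]
    have e1 : ∀ i : Fin m, iteratedDeriv 2
          (fun t => φb (Real.sqrt ‖yPart (updE x (Fin.castAdd n₂ i) t)‖,
            zPart (updE x (Fin.castAdd n₂ i) t))) (x (Fin.castAdd n₂ i))
        = ((B/(4*‖yPart x‖) - A/(4*‖yPart x‖*r))/‖yPart x‖^2 - (A/(2*r))/‖yPart x‖^3)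
            * (yPart x i)^2 + (A/(2*r))/‖yPart x‖ := by
      intro i
      simp only [updE_castAdd, yPart_epair, zPart_epair]
      have hx : x (Fin.castAdd n₂ i) = yPart x i := rfl
      rw [hx, ← hzdef, coordW ψ (yPart x) hx0 i (by rw [← hrdef]; exact hψ), ← hrdef,
        ← hA, ← hB]
      ring
    have e2 : ∀ j : Fin n₂, iteratedDeriv 2
          (fun t => φb (Real.sqrt ‖yPart (updE x (Fin.natAdd m j) t)‖,
            zPart (updE x (Fin.natAdd m j) t))) (x (Fin.natAdd m j))
        = iteratedDeriv 2 (fun t => φb (r, updE z j t)) (z j) := by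
      intro j
      simp only [updE_natAdd, yPart_epair, zPart_epair, ← hzdef, ← hrdef]
      rfl
    rw [Finset.sum_congr rfl (fun i _ => e1 i), Finset.sum_congr rfl (fun j _ => e2 j),
      sumlin, sum_sq_eq_norm_sq]
    have e3 : Lz = ∑ j : Fin n₂, iteratedDeriv 2 (fun t => φb (r, updE z j t)) (z j) := by
      rw [hLzdef]
      unfold lapZ
      simp only [yPart_epair, zPart_epair, hny']
    rw [e3]
  -- the solution equation at the comparison point
  have E := hsol (epair y' z)
  rw [yPart_epair, zPart_epair, hny', hlapY] at E
  -- exponent identity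
  have hm2 : 2 ≤ m := by
    obtain ⟨k, hk⟩ := heven
    omega
  have hn1R : (n₁ : ℝ) = 2*(m : ℝ) - 2 := by
    have : (2*m : ℕ) = (n₁ + 2 : ℕ) := hm
    have h := congrArg (fun t : ℕ => (t : ℝ)) this
    push_cast at h
    linarith
  have hmR : (2:ℝ) ≤ (m:ℝ) := by exact_mod_cast hm2
  have hnR : (1:ℝ) ≤ (n₂:ℝ) := by exact_mod_cast hn₂
  have hexp : (((n₁ : ℝ) + 2 * n₂) + 2) / (((n₁ : ℝ) + 2 * n₂) - 2) = twoStar (m + n₂) - 1 := by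
    unfold twoStar
    have hden : (m:ℝ) + (n₂:ℝ) - 2 ≠ 0 := by intro h; linarith
    have hden2 : 2*(m:ℝ) - 2 + 2*(n₂:ℝ) - 2 ≠ 0 := by intro h; apply hden; linarith
    push_cast
    rw [hn1R]
    rw [eq_sub_iff_add_eq, div_add_one hden2, div_eq_div_iff hden2 hden]
    ring
  rw [hexp] at E
  -- final algebra
  rw [hlapw]
  rw [← hLzdef] at E
  rw [show ‖yPart x‖ = r^2 from hr2.symm]
  rw [hn1R] at E
  have hr0 : r ≠ 0 := hr.ne'
  field_simp at E ⊢
  ring_nf at E ⊢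
  linear_combination 2 * E
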